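/- Let H be an equationally noetherian group. A finitely generated H-limit group G is H-determined if and only if Rk(G) = 1. -/

import Mathlib

open FirstOrder FirstOrder.Language Cardinal

namespace Paper

variable (L : FirstOrder.Language.{0, 0})

/-- A tuple `a` generates `M`: every element is the value of a term at `a`. -/
def Generates {M : Type*} [L.Structure M] {n : ℕ} (a : Fin n → M) : Prop :=
  ∀ y : M, ∃ t : L.Term (Fin n), t.realize a = y

/-- A type over the language `L(c₁,…,cₙ)` in `k` free variables, represented as a set of
`L`-formulas in variables `Fin n ⊕ Fin k` (the first block playing the role of the constants). -/
def NType (n : ℕ) : Type := Σ k : ℕ, Set (L.Formula (Fin n ⊕ Fin k))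

variable {L}

/-- The pair `(M, a)` realizes the type `p` (in the language with the constants interpreted
as `a`). -/
def RealizesNType {M : Type*} [L.Structure M] {n : ℕ} (a : Fin n → M) (p : NType L n) : Prop :=
  ∃ v : Fin p.1 → M, ∀ φ ∈ p.2, φ.Realize (Sum.elim a v)

variable (L) in
/-- The type `pₙ(y) = { y ≠ τ(c̄) | τ an L-term }`. -/
def pType (n : ℕ) : NType L n :=
  ⟨1, { φ | ∃ t : L.Term (Fin n),
    φ = (Term.equal (t.relabel Sum.inl) (Term.var (Sum.inr 0))).not }⟩

/-- The complete type `p_ā(M)` of a tuple, viewed as a set of sentences of `L(c̄)`. -/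
def ctype {M : Type*} [L.Structure M] {n : ℕ} (a : Fin n → M) : NType L n :=
  ⟨0, { φ | ∃ ψ : L.Formula (Fin n), ψ.Realize a ∧ φ = ψ.relabel Sum.inl }⟩

/-- A type (in the language with constants) is supported over a class `K` of models-with-tuples
if some formula, satisfiable in `K`, forces realization of the type throughout `K`. -/
def Supported {T : L.Theory} {n : ℕ} (K : Set (Σ M : Theory.ModelType.{0, 0, 0} T, Fin n → M))
    (p : NType L n) : Prop :=
  ∃ φ : L.Formula (Fin n ⊕ Fin p.1),
    (∃ P ∈ K, ∃ v : Fin p.1 → P.1, φ.Realize (Sum.elim P.2 v)) ∧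
    ∀ P ∈ K, ∀ v : Fin p.1 → P.1, φ.Realize (Sum.elim P.2 v) →
      ∀ ψ ∈ p.2, ψ.Realize (Sum.elim P.2 v)

/-- `rk`: `RankEq T n α M` means the `n`-rank of `M` is `α`. Defined by transfinite
recursion: the rank is `α ≥ 1` iff for every generating `n`-tuple `ā`, `p_ā(M)` is
supported over the class of models (with generating tuple) of `T` omitting `pₙ` and the
complete types of all models of smaller rank. -/
def RankEq (T : L.Theory) (n : ℕ) : Ordinal.{0} → Theory.ModelType.{0, 0, 0} T → Prop :=
  Ordinal.lt_wf.fix fun α ih M =>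
    1 ≤ α ∧ (∃ a : Fin n → M, Generates L a) ∧
      ∀ a : Fin n → M, Generates L a →
        Supported
          { P : Σ N : T.ModelType, Fin n → N |
            ¬ RealizesNType (L := L) P.2 (pType L n) ∧
            ∀ β : Ordinal, (h : β < α) → ∀ N : T.ModelType, ih β h N →
              ∀ b : Fin n → N, Generates L b → ¬ RealizesNType (L := L) P.2 (ctype (L := L) b) }
          (ctype a)

/-- The class `K(T|P_{n,α})`: models of `T` with a distinguished `n`-tuple, omitting `pₙ`
(equivalently, generated by the tuple) and omitting the complete type of every `n`-generated
model of `T` of rank `< α`. -/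
def Kclass (T : L.Theory) (n : ℕ) (α : Ordinal.{0}) :
    Set (Σ M : Theory.ModelType.{0, 0, 0} T, Fin n → M) :=
  { P | ¬ RealizesNType (L := L) P.2 (pType L n) ∧
    ∀ β : Ordinal, β < α → ∀ N : T.ModelType, RankEq T n β N →
      ∀ b : Fin n → N, Generates L b → ¬ RealizesNType (L := L) P.2 (ctype (L := L) b) }

variable (L) in
/-- `n`-generated models of `T` (with countable carrier). -/
abbrev NGenModel (T : L.Theory) (n : ℕ) : Type 1 :=
  { M : Theory.ModelType.{0, 0, 0} T // ∃ a : Fin n → M, Generates L a }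

instance isoSetoid {T : L.Theory} {n : ℕ} : Setoid (NGenModel L T n) where
  r M N := Nonempty (M.1 ≃[L] N.1)
  iseqv := ⟨fun M => ⟨FirstOrder.Language.Equiv.refl L M.1⟩, fun ⟨e⟩ => ⟨e.symm⟩, fun ⟨e⟩ ⟨f⟩ => ⟨FirstOrder.Language.Equiv.comp f e⟩⟩

variable (L) in
/-- `α_n(T)`: the number of isomorphism classes of `n`-generated models of `T`. -/
def alphaCard (T : L.Theory) (n : ℕ) : Cardinal.{1} :=
  Cardinal.mk (Quotient (isoSetoid (L := L) (T := T) (n := n)))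

variable (L) in
/-- `T` is `n`-consistent: it has an `n`-generated model. -/
def NConsistent (T : L.Theory) (n : ℕ) : Prop :=
  ∃ M : Theory.ModelType.{0, 0, 0} T, ∃ a : Fin n → M, Generates L a


/-! ### Universal / existential formulas, ∀∃ theories -/

variable (L) in
/-- A universal formula: universal quantifiers over a quantifier-free formula. -/
def IsUniversalFormula {α : Type} (φ : L.Formula α) : Prop :=
  ∃ (k : ℕ) (ψ : L.BoundedFormula α k), ψ.IsQF ∧ φ = ψ.alls

variable (L) in
/-- An existential formula: existential quantifiers over a quantifier-free formula. -/
def IsExistentialFormula {α : Type} (φ : L.Formula α) : Prop :=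
  ∃ (k : ℕ) (ψ : L.BoundedFormula α k), ψ.IsQF ∧ φ = ψ.exs

/-- Iterated existential quantification of the last `k` bounded variables. -/
def exsTo {α : Type} : ∀ {m k : ℕ}, L.BoundedFormula α (m + k) → L.BoundedFormula α m
  | _, 0, φ => φ
  | _, _ + 1, φ => exsTo φ.ex

variable (L) in
/-- A `∀∃`-sentence: `∀ x̄ ∃ ȳ ψ` with `ψ` quantifier-free. -/
def IsAESentence (σ : L.Sentence) : Prop :=
  ∃ (m k : ℕ) (ψ : L.BoundedFormula Empty (m + k)), ψ.IsQF ∧ σ = (exsTo ψ).alls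

variable (L) in
/-- A `∀∃`-theory. -/
def IsAETheory (T : L.Theory) : Prop := ∀ σ ∈ T, IsAESentence L σ

/-- The universal type `p_{ā,∀}(M)` of a tuple: universal sentences of `L(c̄)` true of `ā`. -/
def utype {M : Type*} [L.Structure M] {n : ℕ} (a : Fin n → M) : NType L n :=
  ⟨0, { φ | ∃ ψ : L.Formula (Fin n),
    IsUniversalFormula L ψ ∧ ψ.Realize a ∧ φ = ψ.relabel Sum.inl }⟩

/-- A universal type is existentially supported over a class `K` if some existential formula,
satisfiable in `K`, forces its realization throughout `K`. -/
def ESupported {T : L.Theory} {n : ℕ} (K : Set (Σ M : Theory.ModelType.{0, 0, 0} T, Fin n → M))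
    (p : NType L n) : Prop :=
  ∃ φ : L.Formula (Fin n ⊕ Fin p.1), IsExistentialFormula L φ ∧
    (∃ P ∈ K, ∃ v : Fin p.1 → P.1, φ.Realize (Sum.elim P.2 v)) ∧
    ∀ P ∈ K, ∀ v : Fin p.1 → P.1, φ.Realize (Sum.elim P.2 v) →
      ∀ ψ ∈ p.2, ψ.Realize (Sum.elim P.2 v)

/-- `Rk`: the rank defined from universal types and existential supports. -/
def URankEq (T : L.Theory) (n : ℕ) : Ordinal.{0} → Theory.ModelType.{0, 0, 0} T → Prop :=
  Ordinal.lt_wf.fix fun α ih M =>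
    1 ≤ α ∧ (∃ a : Fin n → M, Generates L a) ∧
      ∀ a : Fin n → M, Generates L a →
        ESupported
          { P : Σ N : Theory.ModelType.{0, 0, 0} T, Fin n → N |
            ¬ RealizesNType (L := L) P.2 (pType L n) ∧
            ∀ β : Ordinal, (h : β < α) → ∀ N : Theory.ModelType.{0, 0, 0} T, ih β h N →
              ∀ b : Fin n → N, Generates L b → ¬ RealizesNType (L := L) P.2 (utype b) }
          (utype a)

/-- The class `K(T|Q_{n,α})` of the universal rank. -/
def UKclass (T : L.Theory) (n : ℕ) (α : Ordinal.{0}) :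
    Set (Σ M : Theory.ModelType.{0, 0, 0} T, Fin n → M) :=
  { P | ¬ RealizesNType (L := L) P.2 (pType L n) ∧
    ∀ β : Ordinal, β < α → ∀ N : Theory.ModelType.{0, 0, 0} T, URankEq T n β N →
      ∀ b : Fin n → N, Generates L b → ¬ RealizesNType (L := L) P.2 (utype b) }

/-! ### Types in finitely many variables, classes of models, omitting types -/

variable (L) in
/-- A type in finitely many variables. -/
def MType : Type := Σ k : ℕ, Set (L.Formula (Fin k))

variable (L) in
/-- A type all of whose formulas are universal. -/
def IsUniversalMType (p : MType L) : Prop := ∀ φ ∈ p.2, IsUniversalFormula L φ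

/-- A model realizes a type if some tuple satisfies all of its formulas. -/
def MRealizes {T : L.Theory} (M : Theory.ModelType.{0, 0, 0} T) (p : MType L) : Prop :=
  ∃ v : Fin p.1 → M, ∀ φ ∈ p.2, φ.Realize v

/-- The class `K(T|P)` of models of `T` omitting every type in `P`. -/
def KTP (T : L.Theory) (P : Set (MType L)) : Set (Theory.ModelType.{0, 0, 0} T) :=
  { M | ∀ p ∈ P, ¬ MRealizes M p }

/-- A type is supported over a class `K` of models of `T`. -/
def MSupported {T : L.Theory} (K : Set (Theory.ModelType.{0, 0, 0} T)) (q : MType L) : Prop :=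
  ∃ φ : L.Formula (Fin q.1),
    (∃ M ∈ K, ∃ v : Fin q.1 → M, φ.Realize v) ∧
    ∀ M ∈ K, ∀ v : Fin q.1 → M, φ.Realize v → ∀ ψ ∈ q.2, ψ.Realize v

/-- A universal type is existentially supported over a class `K` of models of `T`. -/
def MESupported {T : L.Theory} (K : Set (Theory.ModelType.{0, 0, 0} T)) (q : MType L) : Prop :=
  ∃ φ : L.Formula (Fin q.1), IsExistentialFormula L φ ∧
    (∃ M ∈ K, ∃ v : Fin q.1 → M, φ.Realize v) ∧
    ∀ M ∈ K, ∀ v : Fin q.1 → M, φ.Realize v → ∀ ψ ∈ q.2, ψ.Realize v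


/-! ### Groups -/

/-- The function symbols of the language of groups. -/
inductive GroupFunc : ℕ → Type
  | mul : GroupFunc 2
  | inv : GroupFunc 1
  | one : GroupFunc 0

/-- The first-order language of groups. -/
def grpLang : FirstOrder.Language.{0, 0} := ⟨GroupFunc, fun _ => Empty⟩

/-- Any group is a `grpLang`-structure. -/
instance grpStructure (G : Type*) [Group G] : grpLang.Structure G where
  funMap {n} f v :=
    match f with
    | .mul => v 0 * v 1
    | .inv => (v 0)⁻¹
    | .one => 1
  RelMap {n} r := r.elim

/-- The universal theory `Th_∀(H)` of a group `H`. -/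
def uTheoryOf (H : Type*) [Group H] : grpLang.Theory :=
  { σ | IsUniversalFormula grpLang σ ∧ H ⊨ σ }

/-- The algebraic set `V(S)` defined by a set `S ⊆ H ∗ F(x₁,…,xₙ)` of equations. -/
def Vset {H : Type} [Group H] {n : ℕ} (S : Set (Monoid.Coprod H (FreeGroup (Fin n)))) :
    Set (Fin n → H) :=
  { g | ∀ s ∈ S, Monoid.Coprod.lift (MonoidHom.id H) (FreeGroup.lift g) s = 1 }

/-- A group `H` is equationally noetherian if every algebraic set over `H` is defined by a
finite subsystem. -/
def EquationallyNoetherian (H : Type) [Group H] : Prop :=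
  ∀ (n : ℕ) (S : Set (Monoid.Coprod H (FreeGroup (Fin n)))),
    ∃ S₀ ⊆ S, S₀.Finite ∧ Vset S = Vset S₀

/-- Bundled finitely generated `H`-limit groups (with countable-universe carrier):
finitely generated groups satisfying the universal theory of `H`. -/
def LimitGroup (H : Type) [Group H] : Type 1 :=
  { G : GrpCat.{0} // Group.FG G ∧ (G : Type) ⊨ uTheoryOf H }

instance limitGroupSetoid {H : Type} [Group H] : Setoid (LimitGroup H) where
  r A B := Nonempty ((A.1 : Type) ≃* (B.1 : Type))
  iseqv := ⟨fun A => ⟨MulEquiv.refl _⟩, fun ⟨e⟩ => ⟨e.symm⟩, fun ⟨e⟩ ⟨f⟩ => ⟨e.trans f⟩⟩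

/-- `GRank H G γ` : the group `G`, as a model of `Th_∀(H)`, has universal rank `Rk(G) = γ`
(with respect to some tuple-length). -/
def GRank (H : Type) [Group H] (G : Type) [Group G] (hmod : G ⊨ uTheoryOf H)
    (γ : Ordinal.{0}) : Prop :=
  ∃ n : ℕ, URankEq (uTheoryOf H) n γ
    (@Theory.ModelType.of grpLang (uTheoryOf H) G _ hmod One.instNonempty)

/-- `G` is `H`-determined: some finite set `X ⊆ G \ {1}` is such that every homomorphism
from `G` to an `H`-limit group killing no element of `X` is injective. -/
def HDetermined (H : Type) [Group H] (G : Type) [Group G] : Prop :=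
  ∃ X : Finset G, (1 : G) ∉ X ∧
    ∀ (L' : Type) [Group L'], Group.FG L' → (L' ⊨ uTheoryOf H) →
      ∀ f : G →* L', (∀ x ∈ X, f x ≠ 1) → Function.Injective f


/-! ### Auxiliary development -/

section Aux
open FirstOrder FirstOrder.Language

lemma funMap_mul {G : Type*} [Group G] (v : Fin 2 → G) :
    Structure.funMap (L := grpLang) (M := G) GroupFunc.mul v = v 0 * v 1 := rfl

lemma funMap_inv {G : Type*} [Group G] (v : Fin 1 → G) :
    Structure.funMap (L := grpLang) (M := G) GroupFunc.inv v = (v 0)⁻¹ := rfl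

lemma funMap_one {G : Type*} [Group G] (v : Fin 0 → G) :
    Structure.funMap (L := grpLang) (M := G) GroupFunc.one v = 1 := rfl

/-- term builders -/
def mulT {α : Type*} (t u : grpLang.Term α) : grpLang.Term α := Term.func GroupFunc.mul ![t, u]
def invT {α : Type*} (t : grpLang.Term α) : grpLang.Term α := Term.func GroupFunc.inv ![t]
def oneT {α : Type*} : grpLang.Term α := Term.func GroupFunc.one ![]

lemma realize_mulT {M : Type*} [grpLang.Structure M] {α : Type*} (v : α → M)
    (t u : grpLang.Term α) :
    (mulT t u).realize v
      = Structure.funMap (L := grpLang) GroupFunc.mul ![t.realize v, u.realize v] := by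
  simp only [mulT, Term.realize]
  congr 1; funext i; fin_cases i <;> rfl

lemma realize_invT {M : Type*} [grpLang.Structure M] {α : Type*} (v : α → M)
    (t : grpLang.Term α) :
    (invT t).realize v = Structure.funMap (L := grpLang) GroupFunc.inv ![t.realize v] := by
  simp only [invT, Term.realize]
  congr 1; funext i; fin_cases i <;> rfl

lemma realize_oneT {M : Type*} [grpLang.Structure M] {α : Type*} (v : α → M) :
    (oneT : grpLang.Term α).realize v = Structure.funMap (L := grpLang) GroupFunc.one ![] := by
  simp only [oneT, Term.realize]
  congr 1; funext i; exact i.elim0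

lemma realize_mulT' {M : Type*} [Group M] {α : Type*} (v : α → M) (t u : grpLang.Term α) :
    (mulT t u).realize v = t.realize v * u.realize v := by
  rw [realize_mulT, funMap_mul]; simp

lemma realize_invT' {M : Type*} [Group M] {α : Type*} (v : α → M) (t : grpLang.Term α) :
    (invT t).realize v = (t.realize v)⁻¹ := by
  rw [realize_invT, funMap_inv]; simp

lemma realize_oneT' {M : Type*} [Group M] {α : Type*} (v : α → M) :
    (oneT : grpLang.Term α).realize v = 1 := by
  rw [realize_oneT, funMap_one]

/-- realize commutes with group homs -/
lemma realize_hom {G H' : Type*} [Group G] [Group H'] (f : G →* H') {α : Type*}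
    (v : α → G) (t : grpLang.Term α) : t.realize (f ∘ v) = f (t.realize v) := by
  induction t with
  | var i => rfl
  | func g ts ih =>
    cases g with
    | mul =>
      show Structure.funMap (L := grpLang) GroupFunc.mul (fun i => (ts i).realize (f ∘ v))
        = f (Structure.funMap (L := grpLang) GroupFunc.mul (fun i => (ts i).realize v))
      rw [funMap_mul, funMap_mul, map_mul, ih, ih]
    | inv =>
      show Structure.funMap (L := grpLang) GroupFunc.inv (fun i => (ts i).realize (f ∘ v))
        = f (Structure.funMap (L := grpLang) GroupFunc.inv (fun i => (ts i).realize v))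
      rw [funMap_inv, funMap_inv, map_inv, ih]
    | one =>
      show Structure.funMap (L := grpLang) GroupFunc.one (fun i => (ts i).realize (f ∘ v))
        = f (Structure.funMap (L := grpLang) GroupFunc.one (fun i => (ts i).realize v))
      rw [funMap_one, funMap_one, map_one]

end Aux

section Aux2
open FirstOrder FirstOrder.Language

/-- term from a word (list representation) -/
def termOfList {n : ℕ} : List (Fin n × Bool) → grpLang.Term (Fin n)
  | [] => oneT
  | (i, b) :: l => mulT (bif b then Term.var i else invT (Term.var i)) (termOfList l)

lemma realize_termOfList {M : Type*} [Group M] {n : ℕ} (g : Fin n → M) :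
    ∀ l : List (Fin n × Bool),
      (termOfList l).realize g = (l.map fun x => bif x.2 then g x.1 else (g x.1)⁻¹).prod
  | [] => by simp [termOfList, realize_oneT']
  | (i, b) :: l => by
    simp only [termOfList, realize_mulT', List.map_cons, List.prod_cons,
      realize_termOfList g l]
    cases b
    · rw [show ((bif false then Term.var i else invT (Term.var i)) : grpLang.Term (Fin n))
          = invT (Term.var i) from rfl, realize_invT']
      rfl
    · rfl

/-- term from a free group element -/
def ofWord {n : ℕ} (w : FreeGroup (Fin n)) : grpLang.Term (Fin n) := termOfList w.toWord

lemma realize_ofWord {M : Type*} [Group M] {n : ℕ} (g : Fin n → M) (w : FreeGroup (Fin n)) :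
    (ofWord w).realize g = FreeGroup.lift g w := by
  rw [ofWord, realize_termOfList]
  conv_rhs => rw [← FreeGroup.mk_toWord (x := w)]
  rw [FreeGroup.lift_mk]

/-- free group element from a term -/
def termWord {n : ℕ} : grpLang.Term (Fin n) → FreeGroup (Fin n)
  | .var i => FreeGroup.of i
  | .func GroupFunc.mul v => termWord (v 0) * termWord (v 1)
  | .func GroupFunc.inv v => (termWord (v 0))⁻¹
  | .func GroupFunc.one _ => 1

lemma lift_termWord {M : Type*} [Group M] {n : ℕ} (g : Fin n → M) (t : grpLang.Term (Fin n)) :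
    FreeGroup.lift g (termWord t) = t.realize g := by
  induction t with
  | var i => simp [termWord, Term.realize]
  | func f ts ih =>
    cases f with
    | mul =>
      rw [show Term.realize g (Term.func GroupFunc.mul ts)
          = Structure.funMap (L := grpLang) GroupFunc.mul (fun i => (ts i).realize g) from rfl,
        funMap_mul]
      simp [termWord, map_mul, ih]
    | inv =>
      rw [show Term.realize g (Term.func GroupFunc.inv ts)
          = Structure.funMap (L := grpLang) GroupFunc.inv (fun i => (ts i).realize g) from rfl,
        funMap_inv]
      simp [termWord, ih]
    | one =>
      rw [show Term.realize g (Term.func GroupFunc.one ts)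
          = Structure.funMap (L := grpLang) GroupFunc.one (fun i => (ts i).realize g) from rfl,
        funMap_one]
      simp [termWord]

end Aux2

section Aux3
open FirstOrder FirstOrder.Language

lemma comp_sum_elim {M N : Type*} {α : Type*} {k : ℕ} (f : M → N) (v : α → M) (xs : Fin k → M) :
    f ∘ Sum.elim v xs = Sum.elim (f ∘ v) (f ∘ xs) := by
  funext x; cases x <;> rfl

/-- Key transfer lemma: for a qf formula true (or false) at a valuation in a group `Γ`,
there is a finite set of nontrivial elements such that any hom not killing them preserves
the truth value. -/
lemma qf_transfer {Γ : Type*} [Group Γ] {α : Type*} {k : ℕ}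
    {ψ : grpLang.BoundedFormula α k} (h : ψ.IsQF) (v : α → Γ) (xs : Fin k → Γ) :
    ∃ Y : Finset Γ, (1 : Γ) ∉ Y ∧
      ∀ (Δ : Type*) [Group Δ] (f : Γ →* Δ), (∀ y ∈ Y, f y ≠ 1) →
        (ψ.Realize v xs ↔ ψ.Realize (f ∘ v) (f ∘ xs)) := by
  classical
  induction h with
  | falsum => exact ⟨∅, by simp, fun Δ _ f _ => by simp [BoundedFormula.Realize]⟩
  | of_isAtomic ha =>
    cases ha with
    | equal t₁ t₂ =>
      by_cases he : t₁.realize (Sum.elim v xs) = t₂.realize (Sum.elim v xs)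
      · refine ⟨∅, by simp, fun Δ _ f _ => ?_⟩
        rw [BoundedFormula.realize_bdEqual, BoundedFormula.realize_bdEqual,
          ← comp_sum_elim, realize_hom, realize_hom, he]
        simp [he]
      · refine ⟨{t₁.realize (Sum.elim v xs) * (t₂.realize (Sum.elim v xs))⁻¹}, ?_, ?_⟩
        · simp only [Finset.mem_singleton]
          intro hone
          exact he (by
            have := hone.symm
            rwa [mul_inv_eq_one] at this)
        · intro Δ _ f hf
          have hfne := hf _ (Finset.mem_singleton_self _)
          rw [map_mul, map_inv, ne_eq, mul_inv_eq_one] at hfne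
          rw [BoundedFormula.realize_bdEqual, BoundedFormula.realize_bdEqual,
            ← comp_sum_elim, realize_hom, realize_hom]
          exact iff_of_false he hfne
    | rel R ts => cases R
  | imp h₁ h₂ ih₁ ih₂ =>
    obtain ⟨Y₁, hY₁, hp₁⟩ := ih₁
    obtain ⟨Y₂, hY₂, hp₂⟩ := ih₂
    refine ⟨Y₁ ∪ Y₂, by simp [hY₁, hY₂], fun Δ _ f hf => ?_⟩
    rw [BoundedFormula.realize_imp, BoundedFormula.realize_imp,
      hp₁ Δ f (fun y hy => hf y (Finset.mem_union_left _ hy)),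
      hp₂ Δ f (fun y hy => hf y (Finset.mem_union_right _ hy))]

lemma qf_transfer_inj {Γ Δ : Type*} [Group Γ] [Group Δ] (f : Γ →* Δ)
    (hf : Function.Injective f) {α : Type*} {k : ℕ}
    {ψ : grpLang.BoundedFormula α k} (h : ψ.IsQF) (v : α → Γ) (xs : Fin k → Γ) :
    ψ.Realize v xs ↔ ψ.Realize (f ∘ v) (f ∘ xs) := by
  obtain ⟨Y, hY1, hY⟩ := qf_transfer h v xs
  refine hY Δ f fun y hy hy1 => ?_
  have : y = 1 := hf (by rw [hy1, map_one])
  exact hY1 (this ▸ hy)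

/-- universal formulas transfer along bijective homs -/
lemma realize_univ_bij {Γ Δ : Type*} [Group Γ] [Group Δ] (f : Γ →* Δ)
    (hbij : Function.Bijective f) {α : Type} {φ : grpLang.Formula α}
    (hu : IsUniversalFormula grpLang φ) {v : α → Γ} (h : φ.Realize v) :
    φ.Realize (f ∘ v) := by
  obtain ⟨k, ψ, hqf, rfl⟩ := hu
  rw [BoundedFormula.realize_alls] at h ⊢
  intro xs
  choose xs' hxs' using fun i => hbij.2 (xs i)
  have : f ∘ xs' = xs := funext hxs'
  rw [← this, ← qf_transfer_inj f hbij.1 hqf v xs']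
  exact h xs'

/-- universal formulas descend along injective homs -/
lemma realize_univ_inj {Γ Δ : Type*} [Group Γ] [Group Δ] (f : Γ →* Δ)
    (hf : Function.Injective f) {α : Type} {φ : grpLang.Formula α}
    (hu : IsUniversalFormula grpLang φ) {v : α → Γ} (h : φ.Realize (f ∘ v)) :
    φ.Realize v := by
  obtain ⟨k, ψ, hqf, rfl⟩ := hu
  rw [BoundedFormula.realize_alls] at h ⊢
  intro xs
  rw [qf_transfer_inj f hf hqf v xs]
  exact h (f ∘ xs)

end Aux3

section Aux4
open FirstOrder FirstOrder.Language

/-- bound variable as a term -/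
def bvar {k : ℕ} (i : Fin k) : grpLang.Term (Empty ⊕ Fin k) := Term.var (Sum.inr i)

/-- the associativity sentence -/
def assocBF : grpLang.BoundedFormula Empty 3 :=
  Term.bdEqual (mulT (mulT (bvar 0) (bvar 1)) (bvar 2))
    (mulT (bvar 0) (mulT (bvar 1) (bvar 2)))

def oneMulBF : grpLang.BoundedFormula Empty 1 :=
  Term.bdEqual (mulT oneT (bvar 0)) (bvar 0)

def invMulBF : grpLang.BoundedFormula Empty 1 :=
  Term.bdEqual (mulT (invT (bvar 0)) (bvar 0)) oneT

def assocSentence : grpLang.Sentence := assocBF.alls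
def oneMulSentence : grpLang.Sentence := oneMulBF.alls
def invMulSentence : grpLang.Sentence := invMulBF.alls

lemma realize_bvar {M : Type*} [grpLang.Structure M] {k : ℕ} (v : Empty → M) (xs : Fin k → M)
    (i : Fin k) : (bvar i).realize (Sum.elim v xs) = xs i := rfl

lemma realize_assocSentence {Γ : Type*} [Group Γ] : Γ ⊨ assocSentence := by
  refine BoundedFormula.realize_alls.mpr fun xs => ?_
  rw [assocBF, BoundedFormula.realize_bdEqual, realize_mulT', realize_mulT', realize_mulT',
    realize_mulT', realize_bvar, realize_bvar, realize_bvar]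
  exact mul_assoc _ _ _

lemma realize_oneMulSentence {Γ : Type*} [Group Γ] : Γ ⊨ oneMulSentence := by
  refine BoundedFormula.realize_alls.mpr fun xs => ?_
  rw [oneMulBF, BoundedFormula.realize_bdEqual, realize_mulT', realize_oneT', realize_bvar]
  exact one_mul _

lemma realize_invMulSentence {Γ : Type*} [Group Γ] : Γ ⊨ invMulSentence := by
  refine BoundedFormula.realize_alls.mpr fun xs => ?_
  rw [invMulBF, BoundedFormula.realize_bdEqual, realize_mulT', realize_invT', realize_oneT',
    realize_bvar]
  exact inv_mul_cancel _

lemma assocSentence_mem {H : Type} [Group H] : assocSentence ∈ uTheoryOf H :=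
  ⟨⟨3, assocBF, (BoundedFormula.IsAtomic.equal _ _).isQF, rfl⟩, realize_assocSentence⟩

lemma oneMulSentence_mem {H : Type} [Group H] : oneMulSentence ∈ uTheoryOf H :=
  ⟨⟨1, oneMulBF, (BoundedFormula.IsAtomic.equal _ _).isQF, rfl⟩, realize_oneMulSentence⟩

lemma invMulSentence_mem {H : Type} [Group H] : invMulSentence ∈ uTheoryOf H :=
  ⟨⟨1, invMulBF, (BoundedFormula.IsAtomic.equal _ _).isQF, rfl⟩, realize_invMulSentence⟩

lemma grpStructure_ext {M : Type*} (s₁ s₂ : grpLang.Structure M)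
    (h : ∀ (k : ℕ) (g : GroupFunc k) (v : Fin k → M),
      s₁.funMap g v = s₂.funMap g v) : s₁ = s₂ := by
  rcases s₁ with ⟨f₁, r₁⟩
  rcases s₂ with ⟨f₂, r₂⟩
  congr 1
  · funext k g v
    exact h k g v
  · funext k r
    exact Empty.elim r

lemma vec_two_eta {M : Type*} (v : Fin 2 → M) : ![v 0, v 1] = v := by
  funext i; fin_cases i <;> rfl

lemma vec_one_eta {M : Type*} (v : Fin 1 → M) : ![v 0] = v := by
  funext i; fin_cases i <;> rfl

lemma vec_zero_eta {M : Type*} (v : Fin 0 → M) : (![] : Fin 0 → M) = v := by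
  funext i; exact i.elim0

/-- From a model of the universal theory of a group, extract a group structure
inducing the given first-order structure. -/
lemma groupOfModel {H : Type} [Group H] (M : Type*) (st : grpLang.Structure M)
    (h : @Theory.Model grpLang M st (uTheoryOf H)) :
    ∃ g : Group M, @grpStructure M g = st := by
  letI : Mul M := ⟨fun x y => st.funMap GroupFunc.mul ![x, y]⟩
  letI : Inv M := ⟨fun x => st.funMap GroupFunc.inv ![x]⟩
  letI : One M := ⟨st.funMap GroupFunc.one ![]⟩
  have hassoc := @Theory.realize_sentence_of_mem grpLang M st (uTheoryOf H) h _ assocSentence_mem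
  have honemul := @Theory.realize_sentence_of_mem grpLang M st (uTheoryOf H) h _ oneMulSentence_mem
  have hinvmul := @Theory.realize_sentence_of_mem grpLang M st (uTheoryOf H) h _ invMulSentence_mem
  have hassoc2 := BoundedFormula.realize_alls.mp hassoc
  have honemul2 := BoundedFormula.realize_alls.mp honemul
  have hinvmul2 := BoundedFormula.realize_alls.mp hinvmul
  have hassoc' : ∀ a b c : M, a * b * c = a * (b * c) := by
    intro a b c
    have := hassoc2 ![a, b, c]
    rw [assocBF, BoundedFormula.realize_bdEqual, realize_mulT, realize_mulT, realize_mulT,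
      realize_mulT, realize_bvar, realize_bvar, realize_bvar] at this
    simp at this; exact this
  have honemul' : ∀ a : M, 1 * a = a := by
    intro a
    have := honemul2 ![a]
    rw [oneMulBF, BoundedFormula.realize_bdEqual, realize_mulT, realize_oneT,
      realize_bvar] at this
    simp at this; exact this
  have hinvmul' : ∀ a : M, a⁻¹ * a = 1 := by
    intro a
    have := hinvmul2 ![a]
    rw [invMulBF, BoundedFormula.realize_bdEqual, realize_mulT, realize_invT, realize_oneT,
      realize_bvar] at this
    simp at this; exact this
  refine ⟨Group.ofLeftAxioms hassoc' honemul' hinvmul', ?_⟩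
  refine grpStructure_ext _ _ fun k g v => ?_
  cases g with
  | mul => show v 0 * v 1 = st.funMap GroupFunc.mul v
           show st.funMap GroupFunc.mul ![v 0, v 1] = st.funMap GroupFunc.mul v
           rw [vec_two_eta]
  | inv => show (v 0)⁻¹ = st.funMap GroupFunc.inv v
           show st.funMap GroupFunc.inv ![v 0] = st.funMap GroupFunc.inv v
           rw [vec_one_eta]
  | one => show (1 : M) = st.funMap GroupFunc.one v
           show st.funMap GroupFunc.one ![] = st.funMap GroupFunc.one v
           exact vec_zero_eta v ▸ rfl

end Aux4

section Aux5
open FirstOrder FirstOrder.Language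

/-- conjunction of a list of bounded formulas -/
def conjList {α : Type*} {k : ℕ} : List (grpLang.BoundedFormula α k) → grpLang.BoundedFormula α k
  | [] => ⊤
  | φ :: l => φ ⊓ conjList l

lemma conjList_isQF {α : Type*} {k : ℕ} (l : List (grpLang.BoundedFormula α k))
    (h : ∀ φ ∈ l, φ.IsQF) : (conjList l).IsQF := by
  induction l with
  | nil => exact BoundedFormula.isQF_bot.not
  | cons φ l ih =>
    exact (h φ (by simp)).inf (ih fun ψ hψ => h ψ (by simp [hψ]))

lemma realize_conjList {M : Type*} [grpLang.Structure M] {α : Type*} {k : ℕ}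
    (l : List (grpLang.BoundedFormula α k)) (v : α → M) (xs : Fin k → M) :
    (conjList l).Realize v xs ↔ ∀ φ ∈ l, φ.Realize v xs := by
  induction l with
  | nil => simp [conjList]
  | cons φ l ih =>
    rw [conjList]
    constructor
    · intro h ψ hψ
      rcases List.mem_cons.mp hψ with rfl | hm
      · exact (BoundedFormula.realize_inf.mp h).1
      · exact ih.mp (BoundedFormula.realize_inf.mp h).2 ψ hm
    · intro h
      exact BoundedFormula.realize_inf.mpr ⟨h φ (by simp), ih.mpr fun ψ hψ => h ψ (by simp [hψ])⟩

/-- the formula `w(c̄) = 1`, in the variables `Fin n ⊕ Fin 0` -/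
def eqOneF {n : ℕ} (w : FreeGroup (Fin n)) : grpLang.Formula (Fin n ⊕ Fin 0) :=
  Term.equal ((ofWord w).relabel Sum.inl) oneT

lemma eqOneF_isQF {n : ℕ} (w : FreeGroup (Fin n)) : (eqOneF w).IsQF := by
  apply BoundedFormula.IsAtomic.isQF
  exact BoundedFormula.IsAtomic.equal _ _

lemma realize_eqOneF {M : Type*} [Group M] {n : ℕ} (w : FreeGroup (Fin n))
    (a : Fin n → M) (v : Fin 0 → M) :
    (eqOneF w).Realize (Sum.elim a v) ↔ FreeGroup.lift a w = 1 := by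
  rw [eqOneF, Formula.realize_equal, Term.realize_relabel, realize_oneT']
  have : (Sum.elim a v) ∘ Sum.inl = a := rfl
  rw [this, realize_ofWord]

/-- the formula `w(x̄) = 1` with bound variables, as a `BoundedFormula Empty n` -/
def eqOneBF {n : ℕ} (w : FreeGroup (Fin n)) : grpLang.BoundedFormula Empty n :=
  Term.bdEqual ((ofWord w).relabel Sum.inr) oneT

lemma eqOneBF_isQF {n : ℕ} (w : FreeGroup (Fin n)) : (eqOneBF w).IsQF :=
  (BoundedFormula.IsAtomic.equal _ _).isQF

lemma realize_eqOneBF {M : Type*} [Group M] {n : ℕ} (w : FreeGroup (Fin n))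
    (v : Empty → M) (xs : Fin n → M) :
    (eqOneBF w).Realize v xs ↔ FreeGroup.lift xs w = 1 := by
  rw [eqOneBF, BoundedFormula.realize_bdEqual, Term.realize_relabel, realize_oneT']
  have : (Sum.elim v xs) ∘ Sum.inr = xs := rfl
  rw [this, realize_ofWord]

/-- the implication sentence `∀x̄ (⋀_{u ∈ W} u(x̄)=1 → w(x̄)=1)` -/
def impSentence {n : ℕ} (W : List (FreeGroup (Fin n))) (w : FreeGroup (Fin n)) :
    grpLang.Sentence :=
  ((conjList (W.map eqOneBF)) ⟹ eqOneBF w).alls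

lemma impSentence_univ {n : ℕ} (W : List (FreeGroup (Fin n))) (w : FreeGroup (Fin n)) :
    IsUniversalFormula grpLang (impSentence W w) :=
  ⟨n, _, (conjList_isQF _ (by
      intro φ hφ
      obtain ⟨u, _, rfl⟩ := List.mem_map.mp hφ
      exact eqOneBF_isQF u)).imp (eqOneBF_isQF w), rfl⟩

lemma realize_impSentence {M : Type*} [Group M] {n : ℕ} (W : List (FreeGroup (Fin n)))
    (w : FreeGroup (Fin n)) :
    (M ⊨ impSentence W w) ↔
      ∀ xs : Fin n → M, (∀ u ∈ W, FreeGroup.lift xs u = 1) → FreeGroup.lift xs w = 1 := by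
  rw [impSentence, Sentence.Realize]
  rw [show (Formula.Realize ((conjList (W.map eqOneBF)) ⟹ eqOneBF w).alls
      (default : Empty → M)) ↔ _ from BoundedFormula.realize_alls]
  apply forall_congr'
  intro xs
  rw [BoundedFormula.realize_imp, realize_conjList, realize_eqOneBF]
  constructor
  · intro h hW
    exact h fun φ hφ => by
      obtain ⟨u, hu, rfl⟩ := List.mem_map.mp hφ
      exact (realize_eqOneBF u _ xs).mpr (hW u hu)
  · intro h hconj
    refine h fun u hu => (realize_eqOneBF u _ xs).mp (hconj _ (List.mem_map_of_mem hu))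

end Aux5

section Aux6
open FirstOrder FirstOrder.Language

/-- consequence of equational noetherianity: finitely many relations suffice -/
lemma en_words {H : Type} [Group H] (hH : EquationallyNoetherian H) (n : ℕ)
    (S : Set (FreeGroup (Fin n))) :
    ∃ W : Finset (FreeGroup (Fin n)), ↑W ⊆ S ∧
      ∀ w ∈ S, impSentence W.toList w ∈ uTheoryOf H := by
  obtain ⟨W₀, hW₀S, hW₀fin, hVeq⟩ :=
    Set.exists_subset_image_finite_and.mp (hH n ((Monoid.Coprod.inr : _ →* _) '' S))
  refine ⟨hW₀fin.toFinset, by simpa using hW₀S, fun w hw => ?_⟩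
  refine ⟨impSentence_univ _ _, ?_⟩
  rw [realize_impSentence]
  intro xs hxs
  have hmem : xs ∈ Vset ((Monoid.Coprod.inr : _ →* _) '' W₀) := by
    rintro s ⟨u, hu, rfl⟩
    rw [Monoid.Coprod.lift_apply_inr]
    exact hxs u (by simpa using hu)
  rw [← hVeq] at hmem
  have := hmem (Monoid.Coprod.inr w) ⟨w, hw, rfl⟩
  rwa [Monoid.Coprod.lift_apply_inr] at this

/-- every element is a word in a generating tuple -/
lemma exists_word {M : Type*} [Group M] {n : ℕ} {a : Fin n → M}
    (h : Generates grpLang a) (y : M) : ∃ w : FreeGroup (Fin n), FreeGroup.lift a w = y := by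
  obtain ⟨t, ht⟩ := h y
  exact ⟨termWord t, by rw [lift_termWord, ht]⟩

lemma realize_mem_closure {M : Type*} [Group M] {n : ℕ} (b : Fin n → M)
    (t : grpLang.Term (Fin n)) : t.realize b ∈ Subgroup.closure (Set.range b) := by
  induction t with
  | var i => exact Subgroup.subset_closure ⟨i, rfl⟩
  | func f ts ih =>
    cases f with
    | mul =>
      rw [show Term.realize b (Term.func GroupFunc.mul ts)
          = Structure.funMap (L := grpLang) GroupFunc.mul (fun i => (ts i).realize b) from rfl,
        funMap_mul]
      exact mul_mem (ih 0) (ih 1)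
    | inv =>
      rw [show Term.realize b (Term.func GroupFunc.inv ts)
          = Structure.funMap (L := grpLang) GroupFunc.inv (fun i => (ts i).realize b) from rfl,
        funMap_inv]
      exact inv_mem (ih 0)
    | one =>
      rw [show Term.realize b (Term.func GroupFunc.one ts)
          = Structure.funMap (L := grpLang) GroupFunc.one (fun i => (ts i).realize b) from rfl,
        funMap_one]
      exact one_mem _

lemma fg_of_generates {M : Type*} [Group M] {n : ℕ} {b : Fin n → M}
    (h : Generates grpLang b) : Group.FG M := by
  refine Group.fg_iff.mpr ⟨Set.range b, ?_, Set.finite_range b⟩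
  rw [Subgroup.eq_top_iff']
  intro x
  obtain ⟨t, ht⟩ := h x
  exact ht ▸ realize_mem_closure b t

lemma generates_of_fg {G : Type*} [Group G] (h : Group.FG G) :
    ∃ (n : ℕ) (a : Fin n → G), Generates grpLang a := by
  obtain ⟨S, hS, hfin⟩ := Group.fg_iff.mp h
  obtain ⟨F, rfl⟩ : ∃ F : Finset G, ↑F = S := ⟨hfin.toFinset, hfin.coe_toFinset⟩
  refine ⟨F.card, fun i => ((F.equivFin.symm i : F) : G), ?_⟩
  intro y
  have hy : y ∈ Subgroup.closure (↑F : Set G) := hS ▸ Subgroup.mem_top y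
  refine Subgroup.closure_induction ?_ ?_ ?_ ?_ hy
  · intro x hx
    refine ⟨Term.var (F.equivFin ⟨x, hx⟩), ?_⟩
    show ((F.equivFin.symm (F.equivFin ⟨x, hx⟩) : F) : G) = x
    rw [Equiv.symm_apply_apply]
  · exact ⟨oneT, realize_oneT' _⟩
  · rintro x y _ _ ⟨t, rfl⟩ ⟨u, rfl⟩
    exact ⟨mulT t u, realize_mulT' _ _ _⟩
  · rintro x _ ⟨t, rfl⟩
    exact ⟨invT t, realize_invT' _ _⟩

/-- a hom out of a generated group determined by relation preservation -/
lemma hom_exists {G M : Type*} [Group G] [Group M] {n : ℕ} {a : Fin n → G}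
    (hgen : Generates grpLang a) (b : Fin n → M)
    (hrel : ∀ w : FreeGroup (Fin n), FreeGroup.lift a w = 1 → FreeGroup.lift b w = 1) :
    ∃ f : G →* M, f ∘ a = b := by
  have key : ∀ w w' : FreeGroup (Fin n), FreeGroup.lift a w = FreeGroup.lift a w' →
      FreeGroup.lift b w = FreeGroup.lift b w' := by
    intro w w' hww
    have := hrel (w * w'⁻¹) (by rw [map_mul, map_inv, hww, mul_inv_cancel])
    rw [map_mul, map_inv] at this
    exact mul_inv_eq_one.mp this
  choose wd hwd using fun y => exists_word hgen y
  refine ⟨MonoidHom.mk' (fun y => FreeGroup.lift b (wd y)) fun y z => ?_, funext fun i => ?_⟩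
  · rw [← map_mul]
    exact key _ _ (by rw [map_mul, hwd, hwd, hwd])
  · show FreeGroup.lift b (wd (a i)) = b i
    rw [key (wd (a i)) (FreeGroup.of i) (by rw [hwd]; simp)]
    simp

end Aux6

section Aux7
open FirstOrder FirstOrder.Language

lemma not_realizes_pType_iff {M : Type*} [grpLang.Structure M] {n : ℕ} (a : Fin n → M) :
    ¬ RealizesNType a (pType grpLang n) ↔ Generates grpLang a := by
  have hreal : ∀ (v : Fin 1 → M) (t : grpLang.Term (Fin n)),
      ((Term.equal (t.relabel Sum.inl) (Term.var (Sum.inr 0))).not).Realize (Sum.elim a v)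
        ↔ ¬ (t.realize a = v 0) := by
    intro v t
    rw [Formula.realize_not, Formula.realize_equal, Term.realize_relabel]
    have h1 : (Sum.elim a v) ∘ Sum.inl = a := rfl
    rw [h1]
    rfl
  constructor
  · intro h y
    by_contra hc
    push_neg at hc
    refine h ⟨fun _ => y, ?_⟩
    rintro φ ⟨t, rfl⟩
    exact (hreal _ t).mpr fun he => hc t he
  · intro hgen h
    obtain ⟨v, hv⟩ := h
    obtain ⟨t, ht⟩ := hgen (v (0 : Fin 1))
    exact (hreal v t).mp (hv _ ⟨t, rfl⟩) ht

lemma URankEq_def {L : FirstOrder.Language.{0,0}} (T : L.Theory) (n : ℕ) (α : Ordinal.{0})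
    (M : Theory.ModelType.{0,0,0} T) :
    URankEq T n α M ↔
      (1 ≤ α ∧ (∃ a : Fin n → M, Generates L a) ∧
        ∀ a : Fin n → M, Generates L a →
          ESupported
            { P : Σ N : Theory.ModelType.{0,0,0} T, Fin n → N |
              ¬ RealizesNType (L := L) P.2 (pType L n) ∧
              ∀ β : Ordinal, β < α → ∀ N : Theory.ModelType.{0,0,0} T, URankEq T n β N →
                ∀ b : Fin n → N, Generates L b → ¬ RealizesNType (L := L) P.2 (utype b) }
            (utype a)) := by
  unfold URankEq
  rw [WellFounded.fix_eq]

lemma one_le_of_URankEq {L : FirstOrder.Language.{0,0}} {T : L.Theory} {n : ℕ} {β : Ordinal.{0}}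
    {N : Theory.ModelType.{0,0,0} T} (h : URankEq T n β N) : 1 ≤ β :=
  ((URankEq_def T n β N).mp h).1

lemma not_URankEq_lt_one {L : FirstOrder.Language.{0,0}} {T : L.Theory} {n : ℕ} {β : Ordinal.{0}}
    {N : Theory.ModelType.{0,0,0} T} (hβ : β < 1) : ¬ URankEq T n β N := fun h =>
  absurd (one_le_of_URankEq h) (not_le.mpr hβ)

/-- universal formulas of the tuple's universal type -/
lemma mem_utype {M : Type*} [grpLang.Structure M] {n : ℕ} (a : Fin n → M)
    (ψ : grpLang.Formula (Fin n)) (hu : IsUniversalFormula grpLang ψ) (hr : ψ.Realize a) :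
    ψ.relabel Sum.inl ∈ (utype a).2 := ⟨ψ, hu, hr, rfl⟩

/-- `w(c̄) = 1` is a universal formula over `Fin n` -/
def eqOneF' {n : ℕ} (w : FreeGroup (Fin n)) : grpLang.Formula (Fin n) :=
  Term.equal (ofWord w) oneT

lemma eqOneF'_univ {n : ℕ} (w : FreeGroup (Fin n)) :
    IsUniversalFormula grpLang (eqOneF' w) := ⟨0, eqOneF' w, by
  apply BoundedFormula.IsAtomic.isQF
  exact BoundedFormula.IsAtomic.equal _ _, rfl⟩

lemma neqOneF'_univ {n : ℕ} (w : FreeGroup (Fin n)) :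
    IsUniversalFormula grpLang (eqOneF' w).not := ⟨0, (eqOneF' w).not, by
  apply BoundedFormula.IsQF.not
  apply BoundedFormula.IsAtomic.isQF
  exact BoundedFormula.IsAtomic.equal _ _, rfl⟩

lemma realize_eqOneF' {M : Type*} [Group M] {n : ℕ} (w : FreeGroup (Fin n)) (a : Fin n → M) :
    (eqOneF' w).Realize a ↔ FreeGroup.lift a w = 1 := by
  rw [eqOneF', Formula.realize_equal, realize_oneT', realize_ofWord]

end Aux7

section Main
open FirstOrder FirstOrder.Language

lemma fin0_eq {M : Type*} (u v : Fin 0 → M) : u = v := funext fun i => i.elim0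

lemma lift_comp_hom {Γ Δ : Type*} [Group Γ] [Group Δ] (f : Γ →* Δ) {n : ℕ} (a : Fin n → Γ)
    (w : FreeGroup (Fin n)) : f (FreeGroup.lift a w) = FreeGroup.lift (⇑f ∘ a) w := by
  have : f.comp (FreeGroup.lift a) = FreeGroup.lift (⇑f ∘ a) :=
    FreeGroup.ext_hom _ _ fun i => by simp
  exact DFunLike.congr_fun this w

/-- The class `K` at rank `1`. -/
def Kone (H : Type) [Group H] (n : ℕ) :
    Set (Σ N : Theory.ModelType.{0,0,0} (uTheoryOf H), Fin n → N) :=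
  { P | ¬ RealizesNType (L := grpLang) P.2 (pType grpLang n) ∧
    ∀ β : Ordinal.{0}, β < 1 → ∀ N : Theory.ModelType.{0,0,0} (uTheoryOf H),
      URankEq (uTheoryOf H) n β N →
        ∀ b : Fin n → N, Generates grpLang b → ¬ RealizesNType (L := grpLang) P.2 (utype b) }

lemma mem_Kone {H : Type} [Group H] {n : ℕ}
    (P : Σ N : Theory.ModelType.{0,0,0} (uTheoryOf H), Fin n → N)
    (h : ¬ RealizesNType (L := grpLang) P.2 (pType grpLang n)) : P ∈ Kone H n :=
  ⟨h, fun _ hβ _ hN => absurd hN (not_URankEq_lt_one hβ)⟩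

/-- Forward direction core. -/
lemma forward_support {H : Type} [Group H] (hH : EquationallyNoetherian H)
    {G : Type} [Group G] (hmod : G ⊨ uTheoryOf H)
    (X : Finset G) (hX1 : (1 : G) ∉ X)
    (hXinj : ∀ (L' : Type) [Group L'], Group.FG L' → (L' ⊨ uTheoryOf H) →
      ∀ f : G →* L', (∀ x ∈ X, f x ≠ 1) → Function.Injective f)
    {n : ℕ} (a' : Fin n → G) (hgen' : Generates grpLang a') :
    ESupported (Kone H n) (utype a') := by
  classical
  obtain ⟨W, hWS, hWimp⟩ := en_words hH n {w : FreeGroup (Fin n) | FreeGroup.lift a' w = 1}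
  choose wx hwx using fun x : G => exists_word hgen' x
  refine ⟨conjList ((W.toList.map eqOneF) ++ (X.toList.map fun x => (eqOneF (wx x)).not)),
    ⟨0, conjList ((W.toList.map eqOneF) ++ (X.toList.map fun x => (eqOneF (wx x)).not)),
      ?_, rfl⟩, ?_, ?_⟩
  · -- quantifier-free
    refine conjList_isQF _ fun φ hφ => ?_
    rcases List.mem_append.mp hφ with hm | hm
    · obtain ⟨w, _, rfl⟩ := List.mem_map.mp hm
      exact eqOneF_isQF w
    · obtain ⟨x, _, rfl⟩ := List.mem_map.mp hm
      exact (eqOneF_isQF (wx x)).not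
  · -- satisfied at (G, a')
    refine ⟨⟨@Theory.ModelType.of grpLang (uTheoryOf H) G _ hmod One.instNonempty, a'⟩,
      mem_Kone _ ((not_realizes_pType_iff a').mpr hgen'), fun i => i.elim0, ?_⟩
    refine (realize_conjList _ _ _).mpr fun φ hφ => ?_
    rcases List.mem_append.mp hφ with hm | hm
    · obtain ⟨w, hw, rfl⟩ := List.mem_map.mp hm
      exact (realize_eqOneF w a' _).mpr (hWS (Finset.mem_toList.mp hw))
    · obtain ⟨x, hx, rfl⟩ := List.mem_map.mp hm
      refine Formula.realize_not.mpr fun hr => ?_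
      have : x = 1 := by rw [← hwx x]; exact (realize_eqOneF (wx x) a' _).mp hr
      exact hX1 (this ▸ Finset.mem_toList.mp hx)
  · -- forcing
    rintro ⟨⟨M⟩, b⟩ hPK v hφ ψ hψ
    rename_i stM hMmod hMne
    obtain ⟨g, hg⟩ := groupOfModel M stM hMmod
    subst hg
    letI := g
    obtain ⟨ψ₀, hψu, hψa, rfl⟩ := hψ
    erw [Formula.realize_relabel]
    have hcomp : (Sum.elim b v) ∘ Sum.inl = b := rfl
    erw [hcomp]
    have hconj := (realize_conjList _ _ _).mp hφ
    have heqs : ∀ w ∈ W, FreeGroup.lift b w = 1 := fun w hw =>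
      (realize_eqOneF w b v).mp
        (hconj _ (List.mem_append_left _ (List.mem_map_of_mem (Finset.mem_toList.mpr hw))))
    have hneqs : ∀ x ∈ X, FreeGroup.lift b (wx x) ≠ 1 := fun x hx h1 =>
      Formula.realize_not.mp
        (hconj _ (List.mem_append_right _ (List.mem_map_of_mem (Finset.mem_toList.mpr hx))))
        ((realize_eqOneF (wx x) b v).mpr h1)
    haveI := hMmod
    have hrel : ∀ w : FreeGroup (Fin n), FreeGroup.lift a' w = 1 → FreeGroup.lift b w = 1 := by
      intro w hw
      have hsen := Theory.realize_sentence_of_mem (M := M) (uTheoryOf H) (hWimp w hw)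
      exact (realize_impSentence W.toList w).mp hsen b fun u hu =>
        heqs u (Finset.mem_toList.mp hu)
    obtain ⟨f, hfa⟩ := hom_exists hgen' b hrel
    have hbgen : Generates grpLang b := (not_realizes_pType_iff b).mp hPK.1
    have hfX : ∀ x ∈ X, f x ≠ 1 := by
      intro x hx
      rw [← hwx x, lift_comp_hom, hfa]
      exact hneqs x hx
    have hinj : Function.Injective f := hXinj M (fg_of_generates hbgen) hMmod f hfX
    have hsurj : Function.Surjective f := by
      intro y
      obtain ⟨w, hw⟩ := exists_word hbgen y
      exact ⟨FreeGroup.lift a' w, by rw [lift_comp_hom, hfa, hw]⟩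
    rw [← hfa]
    exact realize_univ_bij f ⟨hinj, hsurj⟩ hψu hψa

/-- Backward direction core. -/
lemma backward_main {H : Type} [Group H]
    {G : Type} [Group G] (hmod : G ⊨ uTheoryOf H)
    {n : ℕ} (a : Fin n → G) (hgen : Generates grpLang a)
    (hES : ESupported (Kone H n) (utype a)) : HDetermined H G := by
  classical
  obtain ⟨φ, ⟨k, ψφ, hψφqf, rfl⟩, ⟨⟨⟨M₀⟩, b₀⟩, hP₀K, v₀, hφP₀⟩, hforce⟩ := hES
  rename_i st₀ hM₀mod hM₀ne
  obtain ⟨g₀, hg₀⟩ := groupOfModel M₀ st₀ hM₀mod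
  subst hg₀
  letI := g₀
  have hgenb₀ : Generates grpLang b₀ := (not_realizes_pType_iff b₀).mp hP₀K.1
  have hU : ∀ ψ : grpLang.Formula (Fin n), IsUniversalFormula grpLang ψ →
      ψ.Realize a → ψ.Realize b₀ := by
    intro ψ hu hr
    have := hforce _ hP₀K v₀ hφP₀ (ψ.relabel Sum.inl) (mem_utype a ψ hu hr)
    rw [Formula.realize_relabel] at this
    exact this
  have hrelb : ∀ w : FreeGroup (Fin n), FreeGroup.lift a w = 1 → FreeGroup.lift b₀ w = 1 :=
    fun w hw => (realize_eqOneF' w b₀).mp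
      (hU _ (eqOneF'_univ w) ((realize_eqOneF' w a).mpr hw))
  have hnrelb : ∀ w : FreeGroup (Fin n), FreeGroup.lift a w ≠ 1 → FreeGroup.lift b₀ w ≠ 1 := by
    intro w hw
    have := hU _ (neqOneF'_univ w) (Formula.realize_not.mpr fun hr =>
      hw ((realize_eqOneF' w a).mp hr))
    exact fun h1 => Formula.realize_not.mp this ((realize_eqOneF' w b₀).mpr h1)
  obtain ⟨f₀, hf₀a⟩ := hom_exists hgen b₀ hrelb
  have hinj₀ : Function.Injective f₀ := by
    rw [injective_iff_map_eq_one]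
    intro x hx
    obtain ⟨w, hw⟩ := exists_word hgen x
    by_contra hne
    apply hnrelb w (by rw [hw]; exact hne)
    rw [← hf₀a, ← lift_comp_hom, hw]
    exact hx
  have hsurj₀ : Function.Surjective f₀ := by
    intro y
    obtain ⟨w, hw⟩ := exists_word hgenb₀ y
    exact ⟨FreeGroup.lift a w, by rw [lift_comp_hom, hf₀a, hw]⟩
  obtain ⟨ds, hds⟩ := BoundedFormula.realize_exs.mp hφP₀
  choose ds' hds' using fun i => hsurj₀ (ds i)
  have hcomp_ds : ⇑f₀ ∘ ds' = ds := funext hds'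
  have hveq : ⇑f₀ ∘ Sum.elim a (fun i : Fin 0 => i.elim0) = Sum.elim b₀ v₀ := by
    rw [comp_sum_elim, hf₀a]
    exact congrArg _ (fin0_eq _ _)
  have hψG : ψφ.Realize (Sum.elim a fun i : Fin 0 => i.elim0) ds' := by
    rw [qf_transfer_inj f₀ hinj₀ hψφqf]
    erw [hcomp_ds, hveq]
    exact hds
  obtain ⟨Y, hY1, hY⟩ := qf_transfer hψφqf (Sum.elim a fun i : Fin 0 => i.elim0) ds'
  refine ⟨Y, hY1, ?_⟩
  intro L' _ hfgL' hmodL' f hfX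
  have h1 : ψφ.Realize (⇑f ∘ Sum.elim a fun i : Fin 0 => i.elim0) (⇑f ∘ ds') :=
    (hY L' f hfX).mp hψG
  set R := f.range with hR
  have hιinj := Subgroup.subtype_injective R
  have hcoe : ∀ x : G, R.subtype (f.rangeRestrict x) = f x := fun x =>
    MonoidHom.coe_rangeRestrict f x
  have h2 : ψφ.Realize (⇑f.rangeRestrict ∘ Sum.elim a fun i : Fin 0 => i.elim0)
      (⇑f.rangeRestrict ∘ ds') := by
    refine (qf_transfer_inj R.subtype hιinj hψφqf _ _).mpr ?_
    have e1 : ⇑R.subtype ∘ (⇑f.rangeRestrict ∘ Sum.elim a fun i : Fin 0 => i.elim0)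
        = ⇑f ∘ Sum.elim a (fun i : Fin 0 => i.elim0) := funext fun z => hcoe _
    have e2 : ⇑R.subtype ∘ (⇑f.rangeRestrict ∘ ds') = ⇑f ∘ ds' := funext fun z => hcoe _
    erw [e1, e2]
    exact h1
  haveI hmodL'' : L' ⊨ uTheoryOf H := hmodL'
  have hRmod : (↥R) ⊨ uTheoryOf H := by
    rw [Theory.model_iff]
    intro σ hσ
    have hσL' : L' ⊨ σ := hmodL''.realize_of_mem σ hσ
    refine realize_univ_inj (Γ := ↥R) R.subtype hιinj hσ.1 (v := default) ?_
    have : ⇑R.subtype ∘ (default : Empty → ↥R) = (default : Empty → L') :=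
      funext fun e => e.elim
    rw [this]
    exact hσL'
  have hgenR : Generates grpLang (⇑f.rangeRestrict ∘ a) := by
    intro y
    obtain ⟨x, hx⟩ := f.rangeRestrict_surjective y
    obtain ⟨t, ht⟩ := hgen x
    exact ⟨t, by rw [realize_hom, ht, hx]⟩
  have hmem := mem_Kone (H := H)
    ⟨@Theory.ModelType.of grpLang (uTheoryOf H) (↥R) _ hRmod ⟨1⟩, ⇑f.rangeRestrict ∘ a⟩
    ((not_realizes_pType_iff _).mpr hgenR)
  have hφR : Formula.Realize ψφ.exs
      (Sum.elim (⇑f.rangeRestrict ∘ a) (fun i : Fin 0 => i.elim0)) := by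
    refine BoundedFormula.realize_exs.mpr ⟨⇑f.rangeRestrict ∘ ds', ?_⟩
    have e3 : Sum.elim (⇑f.rangeRestrict ∘ a) (fun i : Fin 0 => i.elim0)
        = ⇑f.rangeRestrict ∘ Sum.elim a (fun i : Fin 0 => i.elim0) := by
      rw [comp_sum_elim]
      exact congrArg _ (fin0_eq _ _)
    erw [e3]
    exact h2
  have hUR := hforce _ hmem (fun i => i.elim0) hφR
  have hU' : ∀ ψ : grpLang.Formula (Fin n), IsUniversalFormula grpLang ψ →
      ψ.Realize a → ψ.Realize (⇑f.rangeRestrict ∘ a) := by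
    intro ψ hu hr
    have := hUR (ψ.relabel Sum.inl) (mem_utype a ψ hu hr)
    rw [Formula.realize_relabel] at this
    exact this
  rw [injective_iff_map_eq_one]
  intro x hx
  obtain ⟨w, hw⟩ := exists_word hgen x
  by_contra hne
  have hxne : FreeGroup.lift a w ≠ 1 := by rw [hw]; exact hne
  have hn := hU' _ (neqOneF'_univ w) (Formula.realize_not.mpr fun hr =>
    hxne ((realize_eqOneF' w a).mp hr))
  apply Formula.realize_not.mp hn
  refine (realize_eqOneF' w _).mpr ?_
  have hfx' : f.rangeRestrict x = 1 := hιinj (by rw [hcoe, map_one, hx])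
  rw [← lift_comp_hom, hw]
  exact hfx'

end Main
end Paper

/-- For an equationally noetherian group `H`, a finitely generated
`H`-limit group `G` is `H`-determined iff `Rk(G) = 1`. -/
theorem stmt_17 (H : Type) [Group H] (hH : Paper.EquationallyNoetherian H)
    (G : Type) [Group G] (hfg : Group.FG G) (hmod : G ⊨ Paper.uTheoryOf H) :
    Paper.HDetermined H G ↔ Paper.GRank H G hmod 1 := by
  constructor
  · rintro ⟨X, hX1, hXinj⟩
    obtain ⟨n, a, hgen⟩ := Paper.generates_of_fg hfg
    refine ⟨n, (Paper.URankEq_def (Paper.uTheoryOf H) n 1 _).mpr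
      ⟨le_refl 1, ⟨a, hgen⟩, ?_⟩⟩
    intro a' hgen'
    exact Paper.forward_support hH hmod X hX1 hXinj a' hgen'
  · rintro ⟨n, hrank⟩
    obtain ⟨-, ⟨a, hgen⟩, hsupp⟩ := (Paper.URankEq_def (Paper.uTheoryOf H) n 1 _).mp hrank
    exact Paper.backward_main hmod a hgen (hsupp a hgen)
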